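/- With the map of the previous statement: if γ_{N+1} ≥ γ_A ⊕ γ_A for some CM γ_A, then γ_N ≥ γ_A ⊕ γ_B, where γ_B := B_N − C_Nᵀ (A_N − γ_A)⁻ C_N, and moreover γ_B is itself a CM (i.e., γ_B is real symmetric with γ_B ≥ iJ_m). -/

import Mathlib

open Matrix
open scoped Classical ComplexOrder

noncomputable section

/-- Embed a real matrix into the complex matrices. -/
def toC {k l : ℕ} (A : Matrix (Fin k) (Fin l) ℝ) : Matrix (Fin k) (Fin l) ℂ :=
  A.map Complex.ofReal

/-- The standard symplectic form `Jₙ = ⊕ₖ [[0,-1],[1,0]]` on `ℝ^{2n}`. -/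
def J (n : ℕ) : Matrix (Fin (2*n)) (Fin (2*n)) ℝ :=
  Matrix.of fun i j =>
    if i.val + 1 = j.val ∧ i.val % 2 = 0 then -1
    else if j.val + 1 = i.val ∧ j.val % 2 = 0 then 1 else 0

/-- A correlation matrix (CM): a real symmetric `2n×2n` matrix with `γ - iJₙ ≥ 0`. -/
def IsCM {n : ℕ} (γ : Matrix (Fin (2*n)) (Fin (2*n)) ℝ) : Prop :=
  γ.IsSymm ∧ (toC γ - Complex.I • toC (J n)).PosSemidef

/-- The operator norm (largest singular value) of a real matrix. -/
def opNorm {n m : ℕ} (C : Matrix (Fin n) (Fin m) ℝ) : ℝ :=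
  ‖(Matrix.toEuclideanLin (𝕜 := ℝ) C).toContinuousLinearMap‖

/-- The trace norm (sum of singular values) of a real square matrix. -/
def trNorm {k : ℕ} (A : Matrix (Fin k) (Fin k) ℝ) : ℝ :=
  ((Matrix.posSemidef_conjTranspose_mul_self A).1.eigenvectorUnitary.1 *
    diagonal ((fun x : ℝ => (x : ℝ)) ∘ (√·) ∘ (Matrix.posSemidef_conjTranspose_mul_self A).1.eigenvalues) *
    (star (Matrix.posSemidef_conjTranspose_mul_self A).1.eigenvectorUnitary : Matrix (Fin k) (Fin k) ℝ)).trace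

/-- The trace norm of a complex square matrix. -/
def trNormC {k : ℕ} (A : Matrix (Fin k) (Fin k) ℂ) : ℝ :=
  (((Matrix.posSemidef_conjTranspose_mul_self A).1.eigenvectorUnitary.1 *
    diagonal ((fun x : ℝ => (x : ℂ)) ∘ (√·) ∘ (Matrix.posSemidef_conjTranspose_mul_self A).1.eigenvalues) *
    (star (Matrix.posSemidef_conjTranspose_mul_self A).1.eigenvectorUnitary : Matrix (Fin k) (Fin k) ℂ)).trace).re

/-- The Moore–Penrose pseudoinverse of a real matrix. -/
def pinvR {n m : ℕ} (A : Matrix (Fin n) (Fin m) ℝ) : Matrix (Fin m) (Fin n) ℝ :=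
  if h : ∃ B : Matrix (Fin m) (Fin n) ℝ,
      A * B * A = A ∧ B * A * B = B ∧ (A * B)ᵀ = A * B ∧ (B * A)ᵀ = B * A
  then h.choose else 0

/-- The Moore–Penrose pseudoinverse of a complex matrix. -/
def pinvC {n m : ℕ} (A : Matrix (Fin n) (Fin m) ℂ) : Matrix (Fin m) (Fin n) ℂ :=
  if h : ∃ B : Matrix (Fin m) (Fin n) ℂ,
      A * B * A = A ∧ B * A * B = B ∧ (A * B)ᴴ = A * B ∧ (B * A)ᴴ = B * A
  then h.choose else 0

/-- Real part of a complex matrix. -/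
def reM {k l : ℕ} (X : Matrix (Fin k) (Fin l) ℂ) : Matrix (Fin k) (Fin l) ℝ :=
  Matrix.of fun i j => (X i j).re

/-- Imaginary part of a complex matrix. -/
def imM {k l : ℕ} (X : Matrix (Fin k) (Fin l) ℂ) : Matrix (Fin k) (Fin l) ℝ :=
  Matrix.of fun i j => (X i j).im

/-- `X = C (B − iJₘ)⁻ Cᵀ` appearing in the nonlinear map. -/
def Xmap {n m : ℕ} (B : Matrix (Fin (2*m)) (Fin (2*m)) ℝ)
    (C : Matrix (Fin (2*n)) (Fin (2*m)) ℝ) : Matrix (Fin (2*n)) (Fin (2*n)) ℂ :=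
  toC C * pinvC (toC B - Complex.I • toC (J m)) * toC Cᵀ

/-- `A_{N+1} = A_N − Re(X_N)`. -/
def nextA {n m : ℕ} (A : Matrix (Fin (2*n)) (Fin (2*n)) ℝ)
    (B : Matrix (Fin (2*m)) (Fin (2*m)) ℝ) (C : Matrix (Fin (2*n)) (Fin (2*m)) ℝ) :
    Matrix (Fin (2*n)) (Fin (2*n)) ℝ :=
  A - reM (Xmap B C)

/-- `C_{N+1} = −Im(X_N)`. -/
def nextC {n m : ℕ} (B : Matrix (Fin (2*m)) (Fin (2*m)) ℝ)
    (C : Matrix (Fin (2*n)) (Fin (2*m)) ℝ) : Matrix (Fin (2*n)) (Fin (2*n)) ℝ :=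
  - imM (Xmap B C)

/-- CM predicate for a bipartite block-indexed real matrix, w.r.t. `Jₙ ⊕ Jₘ`. -/
def IsCM2 {n m : ℕ} (γ : Matrix (Fin (2*n) ⊕ Fin (2*m)) (Fin (2*n) ⊕ Fin (2*m)) ℝ) : Prop :=
  γ.IsSymm ∧ (γ.map Complex.ofReal -
    Complex.I • (fromBlocks (J n) 0 0 (J m)).map Complex.ofReal).PosSemidef

/-- Separability of a bipartite CM: `γ ≥ γ_A ⊕ γ_B` for some CMs `γ_A, γ_B`. -/
def SepCM {n m : ℕ} (γ : Matrix (Fin (2*n) ⊕ Fin (2*m)) (Fin (2*n) ⊕ Fin (2*m)) ℝ) : Prop :=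
  ∃ (γA : Matrix (Fin (2*n)) (Fin (2*n)) ℝ) (γB : Matrix (Fin (2*m)) (Fin (2*m)) ℝ),
    IsCM γA ∧ IsCM γB ∧ (γ - fromBlocks γA 0 0 γB).PosSemidef

/-- The block matrix `[[A, C],[Cᵀ, A]]` built from the pair `(A, C)`. -/
def γmat {n : ℕ} (p : Matrix (Fin (2*n)) (Fin (2*n)) ℝ × Matrix (Fin (2*n)) (Fin (2*n)) ℝ) :
    Matrix (Fin (2*n) ⊕ Fin (2*n)) (Fin (2*n) ⊕ Fin (2*n)) ℝ :=
  fromBlocks p.1 p.2 p.2ᵀ p.1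

/-- The iterated sequence: `seq A0 B0 C0 N = (A_{N+1}, C_{N+1})`; the map gives `0`
whenever the current matrix is not a CM. -/
def seq {n m : ℕ} (A0 : Matrix (Fin (2*n)) (Fin (2*n)) ℝ)
    (B0 : Matrix (Fin (2*m)) (Fin (2*m)) ℝ) (C0 : Matrix (Fin (2*n)) (Fin (2*m)) ℝ) :
    ℕ → Matrix (Fin (2*n)) (Fin (2*n)) ℝ × Matrix (Fin (2*n)) (Fin (2*n)) ℝ
  | 0 => if IsCM2 (fromBlocks A0 C0 C0ᵀ B0) then (nextA A0 B0 C0, nextC B0 C0) else (0, 0)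
  | (N+1) => if IsCM2 (γmat (seq A0 B0 C0 N)) then
      (nextA (seq A0 B0 C0 N).1 (seq A0 B0 C0 N).1 (seq A0 B0 C0 N).2,
       nextC (seq A0 B0 C0 N).1 (seq A0 B0 C0 N).2)
    else (0, 0)

variable {𝕜 : Type*} [RCLike 𝕜]

/-- Uniqueness of the Moore–Penrose pseudoinverse. -/
theorem mp_unique {k l : ℕ} {A : Matrix (Fin k) (Fin l) 𝕜} {B C : Matrix (Fin l) (Fin k) 𝕜}
    (hB : A * B * A = A ∧ B * A * B = B ∧ (A * B)ᴴ = A * B ∧ (B * A)ᴴ = B * A)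
    (hC : A * C * A = A ∧ C * A * C = C ∧ (A * C)ᴴ = A * C ∧ (C * A)ᴴ = C * A) :
    B = C := by
  obtain ⟨b1, b2, b3, b4⟩ := hB
  obtain ⟨c1, c2, c3, c4⟩ := hC
  have hAB : A * B = A * C := by
    conv_lhs => rw [← c1]
    rw [Matrix.mul_assoc (A*C) A B, ← c3, ← b3, ← conjTranspose_mul,
      ← Matrix.mul_assoc (A*B) A C, b1, c3]
  have hBA : B * A = C * A := by
    conv_lhs => rw [← c1]
    rw [Matrix.mul_assoc A C A, ← Matrix.mul_assoc B A (C*A), ← b4, ← c4,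
      ← conjTranspose_mul]
    rw [Matrix.mul_assoc C A (B*A), ← Matrix.mul_assoc A B A, b1]
  calc B = B*A*B := b2.symm
  _ = C*A*B := by rw [hBA]
  _ = C*(A*C) := by rw [Matrix.mul_assoc, hAB]
  _ = C*A*C := by rw [← Matrix.mul_assoc]
  _ = C := c2

/-- Existence of the Moore–Penrose pseudoinverse for Hermitian matrices. -/
theorem mp_exists {k : ℕ} {A : Matrix (Fin k) (Fin k) 𝕜} (hA : A.IsHermitian) :
    ∃ B : Matrix (Fin k) (Fin k) 𝕜,
      A * B * A = A ∧ B * A * B = B ∧ (A * B)ᴴ = A * B ∧ (B * A)ᴴ = B * A := by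
  set U : Matrix (Fin k) (Fin k) 𝕜 := (hA.eigenvectorUnitary : Matrix (Fin k) (Fin k) 𝕜) with hU
  have hU1 : U * star U = 1 := mem_unitaryGroup_iff.mp hA.eigenvectorUnitary.2
  have hU2 : star U * U = 1 := mem_unitaryGroup_iff'.mp hA.eigenvectorUnitary.2
  set d : Fin k → 𝕜 := RCLike.ofReal ∘ hA.eigenvalues with hd
  have key : ∀ f g : Fin k → 𝕜, (U * diagonal f * star U) * (U * diagonal g * star U)
      = U * diagonal (f * g) * star U := by
    intro f g
    calc (U * diagonal f * star U) * (U * diagonal g * star U)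
        = U * diagonal f * (star U * U) * (diagonal g * star U) := by
          simp only [Matrix.mul_assoc]
      _ = U * (diagonal f * diagonal g) * star U := by
          rw [hU2, Matrix.mul_one]; simp only [Matrix.mul_assoc]
      _ = U * diagonal (f * g) * star U := by rw [diagonal_mul_diagonal]; rfl
  have hspec : A = U * diagonal d * star U := hA.spectral_theorem
  have hstar : ∀ f : Fin k → 𝕜, (∀ i, star (f i) = f i) →
      (U * diagonal f * star U)ᴴ = U * diagonal f * star U := by
    intro f hf
    calc (U * diagonal f * star U)ᴴ = (star U)ᴴ * (diagonal f)ᴴ * Uᴴ := by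
          rw [conjTranspose_mul, conjTranspose_mul, Matrix.mul_assoc]
      _ = U * diagonal f * star U := by
          rw [diagonal_conjTranspose, show star f = f from funext hf,
            ← star_eq_conjTranspose, ← star_eq_conjTranspose, star_star]
  have e1 : (d * fun i => (d i)⁻¹) * d = d := by
    funext i
    simp only [Pi.mul_apply]
    by_cases h : d i = 0
    · simp [h]
    · field_simp
  have e2 : ((fun i => (d i)⁻¹) * d) * (fun i => (d i)⁻¹) = fun i => (d i)⁻¹ := by
    funext i
    simp only [Pi.mul_apply]
    by_cases h : d i = 0
    · simp [h]
    · field_simp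
  have hsd : ∀ i, star ((d * fun i => (d i)⁻¹) i) = (d * fun i => (d i)⁻¹) i := by
    intro i
    simp [hd, Pi.mul_apply, star_mul', RCLike.star_def, map_inv₀, RCLike.conj_ofReal, mul_comm]
  have hsd' : ∀ i, star (((fun i => (d i)⁻¹) * d) i) = ((fun i => (d i)⁻¹) * d) i := by
    intro i
    simp [hd, Pi.mul_apply, star_mul', RCLike.star_def, map_inv₀, RCLike.conj_ofReal, mul_comm]
  refine ⟨U * diagonal (fun i => (d i)⁻¹) * star U, ?_, ?_, ?_, ?_⟩
  · rw [hspec, key, key, e1]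
  · rw [hspec, key, key, e2]
  · rw [hspec, key]
    exact hstar _ hsd
  · rw [hspec, key]
    exact hstar _ hsd'

theorem real_conjTranspose {a b : ℕ} (M : Matrix (Fin a) (Fin b) ℝ) : Mᴴ = Mᵀ := by
  ext i j; simp [conjTranspose_apply]

theorem toC_mul {a b c : ℕ} (A : Matrix (Fin a) (Fin b) ℝ) (B : Matrix (Fin b) (Fin c) ℝ) :
    toC (A * B) = toC A * toC B := by
  ext i j
  simp only [toC, map_apply, mul_apply]
  push_cast
  rfl

theorem toC_sub {a b : ℕ} (A B : Matrix (Fin a) (Fin b) ℝ) :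
    toC (A - B) = toC A - toC B := by
  ext i j; simp [toC]

theorem conjTranspose_toC {a b : ℕ} (M : Matrix (Fin a) (Fin b) ℝ) :
    (toC M)ᴴ = toC Mᵀ := by
  ext i j; simp [toC, conjTranspose_apply, Complex.conj_ofReal]

theorem pinvC_spec {k : ℕ} {A : Matrix (Fin k) (Fin k) ℂ} (hA : A.IsHermitian) :
    A * pinvC A * A = A ∧ pinvC A * A * pinvC A = pinvC A ∧
      (A * pinvC A)ᴴ = A * pinvC A ∧ (pinvC A * A)ᴴ = pinvC A * A := by
  have h := mp_exists hA
  rw [pinvC, dif_pos h]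
  exact h.choose_spec

theorem pinvC_eq {n m : ℕ} {A : Matrix (Fin n) (Fin m) ℂ} {B : Matrix (Fin m) (Fin n) ℂ}
    (h4 : A * B * A = A ∧ B * A * B = B ∧ (A * B)ᴴ = A * B ∧ (B * A)ᴴ = B * A) :
    pinvC A = B := by
  have h : ∃ B : Matrix (Fin m) (Fin n) ℂ,
      A * B * A = A ∧ B * A * B = B ∧ (A * B)ᴴ = A * B ∧ (B * A)ᴴ = B * A := ⟨B, h4⟩
  rw [pinvC, dif_pos h]
  exact mp_unique h.choose_spec h4

theorem pinvC_hermitian {k : ℕ} {A : Matrix (Fin k) (Fin k) ℂ} (hA : A.IsHermitian) :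
    (pinvC A)ᴴ = pinvC A := by
  obtain ⟨p1, p2, p3, p4⟩ := pinvC_spec hA
  set B := pinvC A with hB
  have hAe : Aᴴ = A := hA
  have h4 : A * Bᴴ * A = A ∧ Bᴴ * A * Bᴴ = Bᴴ ∧ (A * Bᴴ)ᴴ = A * Bᴴ ∧ (Bᴴ * A)ᴴ = Bᴴ * A := by
    refine ⟨?_, ?_, ?_, ?_⟩
    · calc A * Bᴴ * A = Aᴴ * Bᴴ * Aᴴ := by rw [hAe]
        _ = (A * (B * A))ᴴ := by rw [conjTranspose_mul, conjTranspose_mul, Matrix.mul_assoc]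
        _ = (A * B * A)ᴴ := by rw [Matrix.mul_assoc]
        _ = A := by rw [p1, hAe]
    · calc Bᴴ * A * Bᴴ = Bᴴ * Aᴴ * Bᴴ := by rw [hAe]
        _ = (B * (A * B))ᴴ := by rw [conjTranspose_mul, conjTranspose_mul, Matrix.mul_assoc]
        _ = (B * A * B)ᴴ := by rw [Matrix.mul_assoc]
        _ = Bᴴ := by rw [p2]
    · have e : A * Bᴴ = B * A := by
        calc A * Bᴴ = Aᴴ * Bᴴ := by rw [hAe]
          _ = (B * A)ᴴ := by rw [conjTranspose_mul]
          _ = B * A := p4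
      rw [e, p4]
    · have e : Bᴴ * A = A * B := by
        calc Bᴴ * A = Bᴴ * Aᴴ := by rw [hAe]
          _ = (A * B)ᴴ := by rw [conjTranspose_mul]
          _ = A * B := p3
      rw [e, p3]
  have := mp_unique h4 ⟨p1, p2, p3, p4⟩
  exact this

theorem pinvR_spec {k : ℕ} {A : Matrix (Fin k) (Fin k) ℝ} (hA : Aᵀ = A) :
    A * pinvR A * A = A ∧ pinvR A * A * pinvR A = pinvR A ∧
      (A * pinvR A)ᵀ = A * pinvR A ∧ (pinvR A * A)ᵀ = pinvR A * A := by
  have hAh : A.IsHermitian := by rw [IsHermitian, real_conjTranspose]; exact hA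
  obtain ⟨B, b1, b2, b3, b4⟩ := mp_exists hAh
  simp only [real_conjTranspose] at b3 b4
  have h : ∃ B : Matrix (Fin k) (Fin k) ℝ,
      A * B * A = A ∧ B * A * B = B ∧ (A * B)ᵀ = A * B ∧ (B * A)ᵀ = B * A :=
    ⟨B, b1, b2, b3, b4⟩
  rw [pinvR, dif_pos h]
  exact h.choose_spec

theorem mp_uniqueR {k l : ℕ} {A : Matrix (Fin k) (Fin l) ℝ} {B C : Matrix (Fin l) (Fin k) ℝ}
    (hB : A * B * A = A ∧ B * A * B = B ∧ (A * B)ᵀ = A * B ∧ (B * A)ᵀ = B * A)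
    (hC : A * C * A = A ∧ C * A * C = C ∧ (A * C)ᵀ = A * C ∧ (C * A)ᵀ = C * A) :
    B = C := by
  apply mp_unique (𝕜 := ℝ) (A := A) <;> simp only [real_conjTranspose] <;> tauto

theorem pinvR_symm {k : ℕ} {A : Matrix (Fin k) (Fin k) ℝ} (hA : Aᵀ = A) :
    (pinvR A)ᵀ = pinvR A := by
  obtain ⟨p1, p2, p3, p4⟩ := pinvR_spec hA
  set B := pinvR A with hB
  have h4 : A * Bᵀ * A = A ∧ Bᵀ * A * Bᵀ = Bᵀ ∧ (A * Bᵀ)ᵀ = A * Bᵀ ∧ (Bᵀ * A)ᵀ = Bᵀ * A := by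
    refine ⟨?_, ?_, ?_, ?_⟩
    · calc A * Bᵀ * A = Aᵀ * Bᵀ * Aᵀ := by rw [hA]
        _ = (A * (B * A))ᵀ := by rw [transpose_mul, transpose_mul, Matrix.mul_assoc]
        _ = (A * B * A)ᵀ := by rw [Matrix.mul_assoc]
        _ = A := by rw [p1, hA]
    · calc Bᵀ * A * Bᵀ = Bᵀ * Aᵀ * Bᵀ := by rw [hA]
        _ = (B * (A * B))ᵀ := by rw [transpose_mul, transpose_mul, Matrix.mul_assoc]
        _ = (B * A * B)ᵀ := by rw [Matrix.mul_assoc]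
        _ = Bᵀ := by rw [p2]
    · have e : A * Bᵀ = B * A := by
        calc A * Bᵀ = Aᵀ * Bᵀ := by rw [hA]
          _ = (B * A)ᵀ := by rw [transpose_mul]
          _ = B * A := p4
      rw [e, p4]
    · have e : Bᵀ * A = A * B := by
        calc Bᵀ * A = Bᵀ * Aᵀ := by rw [hA]
          _ = (A * B)ᵀ := by rw [transpose_mul]
          _ = A * B := p3
      rw [e, p3]
  exact mp_uniqueR h4 ⟨p1, p2, p3, p4⟩

theorem toC_pinvR {k : ℕ} {R : Matrix (Fin k) (Fin k) ℝ} (hR : Rᵀ = R) :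
    pinvC (toC R) = toC (pinvR R) := by
  obtain ⟨p1, p2, p3, p4⟩ := pinvR_spec hR
  refine pinvC_eq ⟨?_, ?_, ?_, ?_⟩
  · rw [← toC_mul, ← toC_mul, p1]
  · rw [← toC_mul, ← toC_mul, p2]
  · rw [← toC_mul, conjTranspose_toC, p3]
  · rw [← toC_mul, conjTranspose_toC, p4]

theorem star_elim {a b : ℕ} (u : Fin a → ℂ) (v : Fin b → ℂ) :
    star (Sum.elim u v) = Sum.elim (star u) (star v) := by
  funext i; cases i <;> simp

theorem psd_block₂₂ {a b : ℕ} {A : Matrix (Fin a) (Fin a) ℂ} {C : Matrix (Fin a) (Fin b) ℂ}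
    {D : Matrix (Fin b) (Fin a) ℂ} {B : Matrix (Fin b) (Fin b) ℂ}
    (h : (fromBlocks A C D B).PosSemidef) : B.PosSemidef := by
  rw [posSemidef_iff_dotProduct_mulVec]
  constructor
  · have h1 := h.1
    rw [IsHermitian, fromBlocks_conjTranspose] at h1
    have := congrArg Matrix.toBlocks₂₂ h1
    simpa [toBlocks_fromBlocks₂₂, IsHermitian] using this
  · intro v
    have h2 := h.dotProduct_mulVec_nonneg (Sum.elim 0 v)
    rw [fromBlocks_mulVec, star_elim] at h2
    simpa [sumElim_dotProduct_sumElim] using h2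

theorem psd_block₁₁ {a b : ℕ} {A : Matrix (Fin a) (Fin a) ℂ} {C : Matrix (Fin a) (Fin b) ℂ}
    {D : Matrix (Fin b) (Fin a) ℂ} {B : Matrix (Fin b) (Fin b) ℂ}
    (h : (fromBlocks A C D B).PosSemidef) : A.PosSemidef := by
  rw [posSemidef_iff_dotProduct_mulVec]
  constructor
  · have h1 := h.1
    rw [IsHermitian, fromBlocks_conjTranspose] at h1
    have := congrArg Matrix.toBlocks₁₁ h1
    simpa [toBlocks_fromBlocks₁₁, IsHermitian] using this
  · intro u
    have h2 := h.dotProduct_mulVec_nonneg (Sum.elim u 0)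
    rw [fromBlocks_mulVec, star_elim] at h2
    simpa [sumElim_dotProduct_sumElim] using h2

theorem psd_block_ker₂ {a b : ℕ} {A : Matrix (Fin a) (Fin a) ℂ} {C : Matrix (Fin a) (Fin b) ℂ}
    {D : Matrix (Fin b) (Fin a) ℂ} {B : Matrix (Fin b) (Fin b) ℂ}
    (h : (fromBlocks A C D B).PosSemidef) {v : Fin b → ℂ} (hv : B *ᵥ v = 0) :
    C *ᵥ v = 0 := by
  have hq : star (Sum.elim (0 : Fin a → ℂ) v) ⬝ᵥ (fromBlocks A C D B) *ᵥ (Sum.elim 0 v) = 0 := by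
    rw [fromBlocks_mulVec, star_elim]
    simp [sumElim_dotProduct_sumElim, hv]
  have h0 := (h.dotProduct_mulVec_zero_iff _).mp hq
  rw [fromBlocks_mulVec] at h0
  funext i
  have := congrFun h0 (Sum.inl i)
  simpa using this

theorem psd_block_ker₁ {a b : ℕ} {A : Matrix (Fin a) (Fin a) ℂ} {C : Matrix (Fin a) (Fin b) ℂ}
    {D : Matrix (Fin b) (Fin a) ℂ} {B : Matrix (Fin b) (Fin b) ℂ}
    (h : (fromBlocks A C D B).PosSemidef) {u : Fin a → ℂ} (hu : A *ᵥ u = 0) :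
    D *ᵥ u = 0 := by
  have hq : star (Sum.elim u (0 : Fin b → ℂ)) ⬝ᵥ (fromBlocks A C D B) *ᵥ (Sum.elim u 0) = 0 := by
    rw [fromBlocks_mulVec, star_elim]
    simp [sumElim_dotProduct_sumElim, hu]
  have h0 := (h.dotProduct_mulVec_zero_iff _).mp hq
  rw [fromBlocks_mulVec] at h0
  funext i
  have := congrFun h0 (Sum.inr i)
  simpa using this

theorem pinv_cancel_of_ker {a b : ℕ} {B : Matrix (Fin a) (Fin a) ℂ} (hB : B.IsHermitian)
    {C : Matrix (Fin b) (Fin a) ℂ} (hker : ∀ v, B *ᵥ v = 0 → C *ᵥ v = 0) :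
    C * pinvC B * B = C := by
  obtain ⟨p1, p2, p3, p4⟩ := pinvC_spec hB
  have key : ∀ v, (C * pinvC B * B) *ᵥ v = C *ᵥ v := by
    intro v
    have hw : B *ᵥ (v - (pinvC B * B) *ᵥ v) = 0 := by
      rw [mulVec_sub, mulVec_mulVec, ← Matrix.mul_assoc, p1, sub_self]
    have h0 := hker _ hw
    rw [mulVec_sub, mulVec_mulVec, ← Matrix.mul_assoc] at h0
    have := sub_eq_zero.mp h0
    exact this.symm
  ext i j
  have := congrFun (key (Pi.single j 1)) i
  simpa [mulVec_single] using this

theorem schur_psd {a b : ℕ} {A : Matrix (Fin a) (Fin a) ℂ} {C : Matrix (Fin a) (Fin b) ℂ}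
    {B : Matrix (Fin b) (Fin b) ℂ} (h : (fromBlocks A C Cᴴ B).PosSemidef) :
    (B - Cᴴ * pinvC A * C).PosSemidef := by
  have hA := psd_block₁₁ h
  have hAH := hA.isHermitian
  have hB := (psd_block₂₂ h).isHermitian
  obtain ⟨p1, p2, p3, p4⟩ := pinvC_spec hAH
  have hPH := pinvC_hermitian hAH
  have hCPA : Cᴴ * pinvC A * A = Cᴴ :=
    pinv_cancel_of_ker hAH fun u hu => psd_block_ker₁ h hu
  have hAPC : A * pinvC A * C = C := by
    have := congrArg conjTranspose hCPA
    rwa [conjTranspose_mul, conjTranspose_mul, conjTranspose_conjTranspose, hPH, hAH,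
      ← Matrix.mul_assoc] at this
  rw [posSemidef_iff_dotProduct_mulVec]
  constructor
  · rw [IsHermitian, conjTranspose_sub, conjTranspose_mul, conjTranspose_mul,
      conjTranspose_conjTranspose, hPH, hB, Matrix.mul_assoc]
  · intro y
    have h2 := h.dotProduct_mulVec_nonneg (Sum.elim (-((pinvC A * C) *ᵥ y)) y)
    have hu1 : A *ᵥ (-((pinvC A * C) *ᵥ y)) + C *ᵥ y = 0 := by
      rw [mulVec_neg, mulVec_mulVec, ← Matrix.mul_assoc, hAPC, neg_add_cancel]
    have hu2 : Cᴴ *ᵥ (-((pinvC A * C) *ᵥ y)) + B *ᵥ y = (B - Cᴴ * pinvC A * C) *ᵥ y := by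
      rw [mulVec_neg, mulVec_mulVec, ← Matrix.mul_assoc, sub_mulVec, neg_add_eq_sub]
    rw [fromBlocks_mulVec, star_elim] at h2
    simp only [Sum.elim_comp_inl, Sum.elim_comp_inr] at h2
    rw [hu1, hu2, sumElim_dotProduct_sumElim, dotProduct_zero, zero_add] at h2
    exact h2

theorem psd_of_schur {a b : ℕ} {A : Matrix (Fin a) (Fin a) ℂ} {C : Matrix (Fin a) (Fin b) ℂ}
    {B : Matrix (Fin b) (Fin b) ℂ} (hA : A.PosSemidef) (hB : B.IsHermitian)
    (hAPC : A * pinvC A * C = C) (hS : (B - Cᴴ * pinvC A * C).PosSemidef) :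
    (fromBlocks A C Cᴴ B).PosSemidef := by
  have hAH := hA.isHermitian
  obtain ⟨p1, p2, p3, p4⟩ := pinvC_spec hAH
  have hPH := pinvC_hermitian hAH
  have hCPA : Cᴴ * pinvC A * A = Cᴴ := by
    have := congrArg conjTranspose hAPC
    rwa [conjTranspose_mul, conjTranspose_mul, hPH, hAH, ← Matrix.mul_assoc] at this
  rw [posSemidef_iff_dotProduct_mulVec]
  constructor
  · rw [IsHermitian, fromBlocks_conjTranspose, hAH, hB, conjTranspose_conjTranspose]
  · intro x
    set u := x ∘ Sum.inl with hu
    set y := x ∘ Sum.inr with hy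
    set w := (pinvC A * C) *ᵥ y with hw
    have e2 : A *ᵥ w = C *ᵥ y := by
      rw [hw, mulVec_mulVec, ← Matrix.mul_assoc, hAPC]
    have estar : star w = star y ᵥ* (Cᴴ * pinvC A) := by
      rw [hw, star_mulVec, conjTranspose_mul, hPH]
    have e1 : star w ⬝ᵥ A *ᵥ u = star y ⬝ᵥ Cᴴ *ᵥ u := by
      rw [estar, ← dotProduct_mulVec, mulVec_mulVec, hCPA]
    have e3 : star w ⬝ᵥ C *ᵥ y = star y ⬝ᵥ (Cᴴ * pinvC A * C) *ᵥ y := by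
      rw [estar, ← dotProduct_mulVec, mulVec_mulVec]
    have key : star x ⬝ᵥ (fromBlocks A C Cᴴ B) *ᵥ x
        = star (u + w) ⬝ᵥ A *ᵥ (u + w) + star y ⬝ᵥ (B - Cᴴ * pinvC A * C) *ᵥ y := by
      conv_lhs => rw [← Sum.elim_comp_inl_inr x]
      rw [fromBlocks_mulVec, star_elim]
      simp only [Sum.elim_comp_inl, Sum.elim_comp_inr, ← hu, ← hy]
      rw [sumElim_dotProduct_sumElim]
      simp only [mulVec_add, dotProduct_add, add_dotProduct, star_add, sub_mulVec,
        dotProduct_sub, e2]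
      rw [e1, e3]
      ring
    rw [key]
    exact add_nonneg (hA.dotProduct_mulVec_nonneg _) (hS.dotProduct_mulVec_nonneg _)

theorem psd_swap {a b : ℕ} {A : Matrix (Fin a) (Fin a) ℂ} {C : Matrix (Fin a) (Fin b) ℂ}
    {D : Matrix (Fin b) (Fin a) ℂ} {B : Matrix (Fin b) (Fin b) ℂ}
    (h : (fromBlocks A C D B).PosSemidef) : (fromBlocks B D C A).PosSemidef := by
  have := h.submatrix Sum.swap
  rwa [fromBlocks_submatrix_sum_swap_sum_swap] at this

theorem toC_mulVec {a b : ℕ} (M : Matrix (Fin a) (Fin b) ℝ) (v : Fin b → ℝ) :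
    toC M *ᵥ (fun i => ((v i : ℂ))) = fun i => (((M *ᵥ v) i : ℂ)) := by
  funext i
  simp only [toC, mulVec, dotProduct, map_apply]
  push_cast
  rfl

theorem toC_dot {a : ℕ} (u v : Fin a → ℝ) :
    (fun i => ((u i : ℂ))) ⬝ᵥ (fun i => ((v i : ℂ))) = ((u ⬝ᵥ v : ℝ) : ℂ) := by
  simp only [dotProduct]
  push_cast
  rfl

theorem star_real_vec {a : ℕ} (v : Fin a → ℝ) :
    star (fun i => ((v i : ℂ))) = fun i => ((v i : ℂ)) := by
  funext i
  simp [Pi.star_apply, Complex.conj_ofReal]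

theorem toC_neg {a b : ℕ} (M : Matrix (Fin a) (Fin b) ℝ) : toC (-M) = -toC M := by
  ext i j; simp [toC]

theorem posSemidef_of_toC {k : ℕ} {M : Matrix (Fin k) (Fin k) ℝ} (hs : Mᵀ = M)
    (h : (toC M).PosSemidef) : M.PosSemidef := by
  rw [posSemidef_iff_dotProduct_mulVec]
  constructor
  · rw [IsHermitian, real_conjTranspose]; exact hs
  · intro v
    have h2 := h.dotProduct_mulVec_nonneg (fun i => ((v i : ℂ)))
    rw [star_real_vec, toC_mulVec, toC_dot] at h2
    exact Complex.zero_le_real.mp h2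

theorem dot_tr {a b : ℕ} (N : Matrix (Fin a) (Fin b) ℝ) (u : Fin a → ℝ) (v : Fin b → ℝ) :
    u ⬝ᵥ N *ᵥ v = v ⬝ᵥ Nᵀ *ᵥ u := by
  rw [dotProduct_mulVec, dotProduct_comm, mulVec_transpose]

theorem psd_complexify {k : ℕ} {M K : Matrix (Fin k) (Fin k) ℝ} (hM : Mᵀ = M) (hK : Kᵀ = -K)
    (h : (fromBlocks M K Kᵀ M).PosSemidef) : (toC M + Complex.I • toC K).PosSemidef := by
  rw [posSemidef_iff_dotProduct_mulVec]
  constructor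
  · rw [IsHermitian, conjTranspose_add, conjTranspose_smul, conjTranspose_toC,
      conjTranspose_toC, hM, hK, toC_neg]
    rw [Complex.star_def, Complex.conj_I, neg_smul, smul_neg, neg_neg]
  · intro z
    set a : Fin k → ℝ := fun i => (z i).re with ha
    set b : Fin k → ℝ := fun i => (z i).im with hb
    set va : Fin k → ℂ := fun i => ((a i : ℂ)) with hva
    set vb : Fin k → ℂ := fun i => ((b i : ℂ)) with hvb
    have hz : z = va + Complex.I • vb := by
      funext i
      simp only [Pi.add_apply, Pi.smul_apply, hva, hvb, smul_eq_mul, ha, hb]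
      rw [mul_comm]
      exact (Complex.re_add_im (z i)).symm
    have hstarz : star z = va - Complex.I • vb := by
      funext i
      simp only [Pi.star_apply, Pi.sub_apply, Pi.smul_apply, hva, hvb, smul_eq_mul, ha, hb]
      apply Complex.ext <;> simp
    -- real quadratic form
    have hform := h.dotProduct_mulVec_nonneg (Sum.elim b a)
    rw [show star (Sum.elim b a) = Sum.elim b a by funext i; cases i <;> simp,
      fromBlocks_mulVec] at hform
    simp only [Sum.elim_comp_inl, Sum.elim_comp_inr] at hform
    rw [sumElim_dotProduct_sumElim, dotProduct_add, dotProduct_add] at hform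
    -- identities
    have haKa : a ⬝ᵥ K *ᵥ a = 0 := by
      have := dot_tr K a a
      rw [hK, neg_mulVec, dotProduct_neg] at this
      linarith
    have hbKb : b ⬝ᵥ K *ᵥ b = 0 := by
      have := dot_tr K b b
      rw [hK, neg_mulVec, dotProduct_neg] at this
      linarith
    have haKb : a ⬝ᵥ K *ᵥ b = -(b ⬝ᵥ K *ᵥ a) := by
      have := dot_tr K a b
      rw [hK, neg_mulVec, dotProduct_neg] at this
      linarith
    have haMb : a ⬝ᵥ M *ᵥ b = b ⬝ᵥ M *ᵥ a := by
      have := dot_tr M a b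
      rwa [hM] at this
    have haKtb : a ⬝ᵥ Kᵀ *ᵥ b = b ⬝ᵥ K *ᵥ a := by
      rw [dot_tr, transpose_transpose]
    rw [hstarz, hz]
    simp only [add_mulVec, smul_mulVec, mulVec_add, mulVec_smul, sub_dotProduct,
      dotProduct_add, dotProduct_smul, smul_dotProduct, smul_eq_mul, toC_mulVec, ← hva, ← hvb]
    rw [show (toC M *ᵥ va) = (fun i => (((M *ᵥ a) i : ℂ))) from toC_mulVec M a,
      show (toC M *ᵥ vb) = (fun i => (((M *ᵥ b) i : ℂ))) from toC_mulVec M b,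
      show (toC K *ᵥ va) = (fun i => (((K *ᵥ a) i : ℂ))) from toC_mulVec K a,
      show (toC K *ᵥ vb) = (fun i => (((K *ᵥ b) i : ℂ))) from toC_mulVec K b]
    rw [show va = (fun i => ((a i : ℂ))) from rfl, show vb = (fun i => ((b i : ℂ))) from rfl]
    rw [toC_dot, toC_dot, toC_dot, toC_dot, toC_dot, toC_dot, toC_dot, toC_dot]
    rw [haKa, hbKb, haKb, haMb]
    have hfin : (0:ℂ) ≤ ((a ⬝ᵥ M *ᵥ a + b ⬝ᵥ M *ᵥ b + 2*(b ⬝ᵥ K *ᵥ a) : ℝ) : ℂ) := by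
      rw [Complex.zero_le_real]
      rw [haKtb] at hform
      linarith
    convert hfin using 1
    push_cast
    ring_nf
    rw [Complex.I_sq]
    ring

section EXTRA

theorem map_mulVec_ofReal {ι κ : Type*} [Fintype κ] (M : Matrix ι κ ℝ) (v : κ → ℝ) :
    M.map Complex.ofReal *ᵥ (fun i => ((v i : ℂ))) = fun i => (((M *ᵥ v) i : ℂ)) := by
  funext i
  simp only [mulVec, dotProduct, map_apply]
  push_cast
  rfl

theorem dot_ofReal {ι : Type*} [Fintype ι] (u v : ι → ℝ) :
    (fun i => ((u i : ℂ))) ⬝ᵥ (fun i => ((v i : ℂ))) = ((u ⬝ᵥ v : ℝ) : ℂ) := by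
  simp only [dotProduct]
  push_cast
  rfl

theorem star_vec_ofReal {ι : Type*} (v : ι → ℝ) :
    star (fun i => ((v i : ℂ))) = fun i => ((v i : ℂ)) := by
  funext i
  simp [Pi.star_apply, Complex.conj_ofReal]

theorem posSemidef_of_map {ι : Type*} [Fintype ι] {M : Matrix ι ι ℝ} (hs : Mᵀ = M)
    (h : (M.map Complex.ofReal).PosSemidef) : M.PosSemidef := by
  rw [posSemidef_iff_dotProduct_mulVec]
  constructor
  · have : Mᴴ = Mᵀ := by ext i j; simp [conjTranspose_apply]
    rw [IsHermitian, this]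
    exact hs
  · intro v
    have h2 := h.dotProduct_mulVec_nonneg (fun i => ((v i : ℂ)))
    rw [star_vec_ofReal, map_mulVec_ofReal, dot_ofReal] at h2
    exact Complex.zero_le_real.mp h2

theorem fromBlocks_sub {a b : ℕ} (A A' : Matrix (Fin a) (Fin a) ℝ) (B B' : Matrix (Fin a) (Fin b) ℝ)
    (C C' : Matrix (Fin b) (Fin a) ℝ) (D D' : Matrix (Fin b) (Fin b) ℝ) :
    fromBlocks A B C D - fromBlocks A' B' C' D' =
      fromBlocks (A - A') (B - B') (C - C') (D - D') := by
  ext i j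
  rcases i with i | i <;> rcases j with j | j <;> simp [fromBlocks]

theorem J_transpose (p : ℕ) : (_root_.J p)ᵀ = -(_root_.J p) := by
  ext i j
  simp only [transpose_apply, Matrix.neg_apply, _root_.J, of_apply]
  split_ifs with h1 h2 <;> first | (exfalso; omega) | norm_num

theorem reM_symm {k : ℕ} {X : Matrix (Fin k) (Fin k) ℂ} (hX : Xᴴ = X) :
    (reM X)ᵀ = reM X := by
  ext i j
  simp only [transpose_apply, reM, of_apply]
  have h := congrFun (congrFun hX i) j
  rw [conjTranspose_apply] at h
  rw [← h]
  simp

theorem imM_antisymm {k : ℕ} {X : Matrix (Fin k) (Fin k) ℂ} (hX : Xᴴ = X) :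
    (imM X)ᵀ = -(imM X) := by
  ext i j
  simp only [transpose_apply, Matrix.neg_apply, imM, of_apply]
  have h := congrFun (congrFun hX i) j
  rw [conjTranspose_apply] at h
  rw [← h]
  simp

theorem reim_recompose {k : ℕ} (X : Matrix (Fin k) (Fin k) ℂ) :
    toC (reM X) + Complex.I • toC (imM X) = X := by
  ext i j
  simp only [Matrix.add_apply, Matrix.smul_apply, toC, map_apply, reM, imM, of_apply,
    smul_eq_mul]
  rw [mul_comm]
  exact Complex.re_add_im (X i j)

end EXTRA

/-- Prop. 3: if `γ_{N+1} ≥ γ_A ⊕ γ_A` for a CM `γ_A`, then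
`γ_N ≥ γ_A ⊕ γ_B` where `γ_B = B_N − C_Nᵀ (A_N − γ_A)⁻ C_N` is itself a CM. -/
theorem prop3 {n m : ℕ} (AN : Matrix (Fin (2*n)) (Fin (2*n)) ℝ)
    (BN : Matrix (Fin (2*m)) (Fin (2*m)) ℝ) (CN : Matrix (Fin (2*n)) (Fin (2*m)) ℝ)
    (hCM : IsCM2 (Matrix.fromBlocks AN CN CNᵀ BN))
    (γA : Matrix (Fin (2*n)) (Fin (2*n)) ℝ) (hγA : IsCM γA)
    (hsep : (Matrix.fromBlocks (nextA AN BN CN) (nextC BN CN) (nextC BN CN)ᵀ (nextA AN BN CN)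
      - Matrix.fromBlocks γA 0 0 γA).PosSemidef) :
    IsCM (BN - CNᵀ * pinvR (AN - γA) * CN) ∧
    (Matrix.fromBlocks AN CN CNᵀ BN
      - Matrix.fromBlocks γA 0 0 (BN - CNᵀ * pinvR (AN - γA) * CN)).PosSemidef := by
  classical
  obtain ⟨hsym, hpsd⟩ := hCM
  -- symmetry of blocks
  have hsym' := hsym
  rw [Matrix.IsSymm, fromBlocks_transpose] at hsym'
  have hsymAN : ANᵀ = AN := by
    have := congrArg Matrix.toBlocks₁₁ hsym'
    simpa [toBlocks_fromBlocks₁₁] using this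
  have hsymBN : BNᵀ = BN := by
    have := congrArg Matrix.toBlocks₂₂ hsym'
    simpa [toBlocks_fromBlocks₂₂] using this
  have hsymγA : γAᵀ = γA := hγA.1
  -- the full CM as a complex block matrix
  set Bh : Matrix (Fin (2*m)) (Fin (2*m)) ℂ := toC BN - Complex.I • toC (_root_.J m) with hBhdef
  set Ah : Matrix (Fin (2*n)) (Fin (2*n)) ℂ := toC AN - Complex.I • toC (_root_.J n) with hAhdef
  set Cc : Matrix (Fin (2*n)) (Fin (2*m)) ℂ := toC CN with hCcdef
  set Ct : Matrix (Fin (2*m)) (Fin (2*n)) ℂ := toC CNᵀ with hCtdef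
  have hMfull : (fromBlocks AN CN CNᵀ BN).map Complex.ofReal -
      Complex.I • (fromBlocks (_root_.J n) 0 0 (_root_.J m)).map Complex.ofReal
      = fromBlocks Ah Cc Ct Bh := by
    ext i j
    rcases i with i | i <;> rcases j with j | j <;>
      simp [fromBlocks, toC, hAhdef, hBhdef, hCcdef, hCtdef]
  have hMf : (fromBlocks Ah Cc Ct Bh).PosSemidef := by rw [← hMfull]; exact hpsd
  have hBh_psd : Bh.PosSemidef := psd_block₂₂ hMf
  have hBh_H : Bh.IsHermitian := hBh_psd.isHermitian
  obtain ⟨q1, q2, q3, q4⟩ := pinvC_spec hBh_H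
  have hPH := pinvC_hermitian hBh_H
  have hPpsd : (pinvC Bh).PosSemidef := by
    have h0 := hBh_psd.conjTranspose_mul_mul_same (pinvC Bh)
    rw [hPH, q2] at h0
    exact h0
  have hCtH : Ctᴴ = Cc := by rw [hCtdef, conjTranspose_toC, transpose_transpose]
  have hCcH : Ccᴴ = Ct := by rw [hCcdef, conjTranspose_toC]
  have hCPB : Cc * pinvC Bh * Bh = Cc :=
    pinv_cancel_of_ker hBh_H fun v hv => psd_block_ker₂ hMf hv
  have hBPCt : Bh * pinvC Bh * Ct = Ct := by
    have h0 := congrArg conjTranspose hCPB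
    rwa [conjTranspose_mul, conjTranspose_mul, hPH, show Bhᴴ = Bh from hBh_H, hCcH,
      ← Matrix.mul_assoc] at h0
  -- the matrix X
  have hXdef : Xmap BN CN = Cc * pinvC Bh * Ct := rfl
  set X : Matrix (Fin (2*n)) (Fin (2*n)) ℂ := Cc * pinvC Bh * Ct with hX
  have hXH : Xᴴ = X := by
    rw [hX, conjTranspose_mul, conjTranspose_mul, hCtH, hPH, hCcH, Matrix.mul_assoc]
  have hXpsd : X.PosSemidef := by
    have h0 := hPpsd.mul_mul_conjTranspose_same Cc
    rwa [hCcH] at h0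
  -- from hsep: toC (AN - γA) - X is PSD
  have hsep2 : (fromBlocks ((AN - γA) - reM X) (-(imM X)) (-(imM X))ᵀ ((AN - γA) - reM X)).PosSemidef := by
    have e : fromBlocks (nextA AN BN CN) (nextC BN CN) (nextC BN CN)ᵀ (nextA AN BN CN)
        - fromBlocks γA 0 0 γA
        = fromBlocks ((AN - γA) - reM X) (-(imM X)) (-(imM X))ᵀ ((AN - γA) - reM X) := by
      rw [fromBlocks_sub, sub_zero, sub_zero]
      have eA : nextA AN BN CN - γA = (AN - γA) - reM X := by
        rw [nextA, hXdef, sub_right_comm]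
      rw [eA]
      rfl
    rwa [e] at hsep
  have hMre_symm : ((AN - γA) - reM X)ᵀ = (AN - γA) - reM X := by
    rw [transpose_sub, transpose_sub, hsymAN, hsymγA, reM_symm hXH]
  have hKim_anti : (-(imM X))ᵀ = -(-(imM X)) := by
    rw [transpose_neg, imM_antisymm hXH]
  have hRX : (toC (AN - γA) - X).PosSemidef := by
    have h0 := psd_complexify hMre_symm hKim_anti hsep2
    have e : toC ((AN - γA) - reM X) + Complex.I • toC (-(imM X)) = toC (AN - γA) - X := by
      rw [toC_sub, toC_neg, smul_neg, ← sub_eq_add_neg, sub_sub, reim_recompose]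
    rwa [e] at h0
  -- positivity of toC (AN - γA) and the big block matrix
  have hRsym : (AN - γA)ᵀ = AN - γA := by rw [transpose_sub, hsymAN, hsymγA]
  have hRcpsd : (toC (AN - γA)).PosSemidef := by
    have h0 := hRX.add hXpsd
    rwa [sub_add_cancel] at h0
  have hRcH : (toC (AN - γA)).IsHermitian := hRcpsd.isHermitian
  have hS0 : (toC (AN - γA) - Ctᴴ * pinvC Bh * Ct).PosSemidef := by
    rw [hCtH]; exact hRX
  have hTop : (fromBlocks Bh Ct Ctᴴ (toC (AN - γA))).PosSemidef :=
    psd_of_schur hBh_psd hRcH hBPCt hS0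
  have hSwap : (fromBlocks (toC (AN - γA)) Cc Ct Bh).PosSemidef := by
    have h0 := psd_swap hTop
    rwa [hCtH] at h0
  -- the Schur complement of the top-left block
  have hSwap' : (fromBlocks (toC (AN - γA)) Cc Ccᴴ Bh).PosSemidef := by rwa [hCcH]
  have hgoal1C : (Bh - Ccᴴ * pinvC (toC (AN - γA)) * Cc).PosSemidef := schur_psd hSwap'
  -- pseudoinverse cancellation for AN - γA
  have hQH := pinvC_hermitian hRcH
  have hCtPR : Ct * pinvC (toC (AN - γA)) * toC (AN - γA) = Ct :=
    pinv_cancel_of_ker hRcH fun u hu => psd_block_ker₁ hSwap hu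
  have hRPC : toC (AN - γA) * pinvC (toC (AN - γA)) * Cc = Cc := by
    have h0 := congrArg conjTranspose hCtPR
    rwa [conjTranspose_mul, conjTranspose_mul, hQH, show (toC (AN - γA))ᴴ = toC (AN - γA) from hRcH,
      hCtH, ← Matrix.mul_assoc] at h0
  have hQ : pinvC (toC (AN - γA)) = toC (pinvR (AN - γA)) := toC_pinvR hRsym
  -- γB is symmetric
  have hprodsym : (CNᵀ * pinvR (AN - γA) * CN)ᵀ = CNᵀ * pinvR (AN - γA) * CN := by
    rw [transpose_mul, transpose_mul, transpose_transpose, pinvR_symm hRsym, Matrix.mul_assoc]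
  have hγBsym : (BN - CNᵀ * pinvR (AN - γA) * CN).IsSymm := by
    rw [Matrix.IsSymm, transpose_sub, hsymBN, hprodsym]
  -- goal 2 over ℂ
  have htoCprod : toC (CNᵀ * pinvR (AN - γA) * CN) = Ccᴴ * pinvC (toC (AN - γA)) * Cc := by
    rw [toC_mul, toC_mul, ← hQ, hCcH]
  have hG2C : ((fromBlocks (AN - γA) CN CNᵀ (CNᵀ * pinvR (AN - γA) * CN)).map
      Complex.ofReal).PosSemidef := by
    have e : (fromBlocks (AN - γA) CN CNᵀ (CNᵀ * pinvR (AN - γA) * CN)).map Complex.ofReal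
        = fromBlocks (toC (AN - γA)) Cc Ccᴴ (Ccᴴ * pinvC (toC (AN - γA)) * Cc) := by
      rw [fromBlocks_map]
      show fromBlocks (toC (AN - γA)) Cc Ct (toC (CNᵀ * pinvR (AN - γA) * CN)) = _
      rw [htoCprod, ← hCcH]
    rw [e]
    refine psd_of_schur hRcpsd ?_ hRPC ?_
    · rw [IsHermitian, conjTranspose_mul, conjTranspose_mul, conjTranspose_conjTranspose, hQH,
        Matrix.mul_assoc]
    · rw [sub_self]
      exact Matrix.PosSemidef.zero
  have hG2sym : (fromBlocks (AN - γA) CN CNᵀ (CNᵀ * pinvR (AN - γA) * CN))ᵀ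
      = fromBlocks (AN - γA) CN CNᵀ (CNᵀ * pinvR (AN - γA) * CN) := by
    rw [fromBlocks_transpose, hRsym, hprodsym, transpose_transpose]
  have hG2 : (fromBlocks (AN - γA) CN CNᵀ (CNᵀ * pinvR (AN - γA) * CN)).PosSemidef :=
    posSemidef_of_map hG2sym hG2C
  constructor
  · refine ⟨hγBsym, ?_⟩
    have e : toC (BN - CNᵀ * pinvR (AN - γA) * CN) - Complex.I • toC (_root_.J m)
        = Bh - Ccᴴ * pinvC (toC (AN - γA)) * Cc := by
      rw [toC_sub, htoCprod, sub_right_comm, hBhdef]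
    rw [e]
    exact hgoal1C
  · have e : fromBlocks AN CN CNᵀ BN - fromBlocks γA 0 0 (BN - CNᵀ * pinvR (AN - γA) * CN)
        = fromBlocks (AN - γA) CN CNᵀ (CNᵀ * pinvR (AN - γA) * CN) := by
      rw [fromBlocks_sub, sub_zero, sub_zero, sub_sub_cancel]
    rw [e]
    exact hG2
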